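/- For every matrix A in SL_5(ℂ) (complex 5×5 matrices of determinant 1), all skew-symmetric matrices X_1, X_2, X_3, X_4 ∈ Alt_5, and all indices i, j, k, l, m ∈ {1,2,3,4}, one has [ijklm](A X_1 ᵗA, A X_2 ᵗA, A X_3 ᵗA, A X_4 ᵗA) = [ijklm](X_1, X_2, X_3, X_4), where ᵗA denotes the transpose of A. -/

import Mathlib

open Matrix

noncomputable section

/-- Pfaffian of a 4×4 (skew-symmetric) complex matrix. -/
def pf4 (W : Matrix (Fin 4) (Fin 4) ℂ) : ℂ :=
  W 0 1 * W 2 3 - W 0 2 * W 1 3 + W 0 3 * W 1 2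

/-- The 4×4 matrix obtained from a 5×5 matrix by deleting the `i`-th row and column. -/
def delRC (X : Matrix (Fin 5) (Fin 5) ℂ) (i : Fin 5) : Matrix (Fin 4) (Fin 4) ℂ :=
  X.submatrix i.succAbove i.succAbove

/-- The `SL₅`-equivariant bilinear map `β : Alt₅ × Alt₅ → ℂ⁵`. -/
def betaMap (X Y : Matrix (Fin 5) (Fin 5) ℂ) : Fin 5 → ℂ := fun i =>
  (-1 : ℂ) ^ (i : ℕ) * (pf4 (delRC (X + Y) i) - pf4 (delRC X i) - pf4 (delRC Y i))

/-- The invariant `[ijklm](X₁,X₂,X₃,X₄) = ᵗβ(Xᵢ,Xⱼ) Xₖ β(Xₗ,Xₘ)`. -/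
def bracket (i j k l m : Fin 4) (X : Fin 4 → Matrix (Fin 5) (Fin 5) ℂ) : ℂ :=
  ∑ a : Fin 5, ∑ b : Fin 5, betaMap (X i) (X j) a * (X k) a b * betaMap (X l) (X m) b

/-- The vector of (signed) principal Pfaffian minors. -/
def pvec (X : Matrix (Fin 5) (Fin 5) ℂ) : Fin 5 → ℂ := fun i =>
  (-1 : ℂ) ^ (i : ℕ) * pf4 (delRC X i)

/-- The equivariance property of `pvec`. -/
def Pp (A : Matrix (Fin 5) (Fin 5) ℂ) : Prop :=
  ∀ X : Matrix (Fin 5) (Fin 5) ℂ, Xᵀ = -X →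
    Aᵀ *ᵥ pvec (A * X * Aᵀ) = A.det • pvec X

lemma Pp_diagonal (D : Fin 5 → ℂ) : Pp (diagonal D) := by
  intro X hX
  funext u
  fin_cases u <;>
  · simp (config := { decide := true }) [pvec, pf4, delRC, mulVec, dotProduct,
      Matrix.mul_apply, Matrix.diagonal_apply, Matrix.diagonal_transpose, Matrix.det_diagonal, Fin.prod_univ_five,
      Fin.sum_univ_five,
      (show (((0:Fin 5)).succAbove 0) = (1:Fin 5) by decide),
      (show (((0:Fin 5)).succAbove 1) = (2:Fin 5) by decide),
      (show (((0:Fin 5)).succAbove 2) = (3:Fin 5) by decide),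
      (show (((0:Fin 5)).succAbove 3) = (4:Fin 5) by decide),
      (show (((1:Fin 5)).succAbove 0) = (0:Fin 5) by decide),
      (show (((1:Fin 5)).succAbove 1) = (2:Fin 5) by decide),
      (show (((1:Fin 5)).succAbove 2) = (3:Fin 5) by decide),
      (show (((1:Fin 5)).succAbove 3) = (4:Fin 5) by decide),
      (show (((2:Fin 5)).succAbove 0) = (0:Fin 5) by decide),
      (show (((2:Fin 5)).succAbove 1) = (1:Fin 5) by decide),
      (show (((2:Fin 5)).succAbove 2) = (3:Fin 5) by decide),
      (show (((2:Fin 5)).succAbove 3) = (4:Fin 5) by decide),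
      (show (((3:Fin 5)).succAbove 0) = (0:Fin 5) by decide),
      (show (((3:Fin 5)).succAbove 1) = (1:Fin 5) by decide),
      (show (((3:Fin 5)).succAbove 2) = (2:Fin 5) by decide),
      (show (((3:Fin 5)).succAbove 3) = (4:Fin 5) by decide),
      (show (((4:Fin 5)).succAbove 0) = (0:Fin 5) by decide),
      (show (((4:Fin 5)).succAbove 1) = (1:Fin 5) by decide),
      (show (((4:Fin 5)).succAbove 2) = (2:Fin 5) by decide),
      (show (((4:Fin 5)).succAbove 3) = (3:Fin 5) by decide),
      (show (Fin.succ (0:Fin 4)) = (1:Fin 5) by decide),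
      (show (Fin.castSucc (0:Fin 4)) = (0:Fin 5) by decide),
      (show (Fin.succ (1:Fin 4)) = (2:Fin 5) by decide),
      (show (Fin.castSucc (1:Fin 4)) = (1:Fin 5) by decide),
      (show (Fin.succ (2:Fin 4)) = (3:Fin 5) by decide),
      (show (Fin.castSucc (2:Fin 4)) = (2:Fin 5) by decide),
      (show (Fin.succ (3:Fin 4)) = (4:Fin 5) by decide),
      (show (Fin.castSucc (3:Fin 4)) = (3:Fin 5) by decide),
      Pi.smul_apply, smul_eq_mul]
    try ring

set_option maxHeartbeats 4000000 in
set_option maxRecDepth 20000 in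
lemma Pp_transvection (t : TransvectionStruct (Fin 5) ℂ) : Pp t.toMatrix := by
  obtain ⟨p, q, hpq, c⟩ := t
  rw [TransvectionStruct.toMatrix_mk]
  intro X hX
  rw [det_transvection_of_ne p q hpq, one_smul]
  have h : ∀ a b : Fin 5, X b a = - X a b := fun a b => by
    have := congrFun (congrFun hX a) b; simpa using this
  have z0 : X 0 0 = 0 := by linear_combination (h 0 0)/2
  have z1 : X 1 1 = 0 := by linear_combination (h 1 1)/2
  have z2 : X 2 2 = 0 := by linear_combination (h 2 2)/2
  have z3 : X 3 3 = 0 := by linear_combination (h 3 3)/2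
  have z4 : X 4 4 = 0 := by linear_combination (h 4 4)/2
  fin_cases p <;> fin_cases q <;>
    first
    | exact absurd rfl hpq
    | (funext u
       fin_cases u <;>
       · simp (config := { decide := true }) [pvec, pf4, delRC, mulVec, dotProduct,
           Matrix.mul_apply, transvection, Matrix.single, Matrix.one_apply, Fin.sum_univ_five,
      (show (((0:Fin 5)).succAbove 0) = (1:Fin 5) by decide),
      (show (((0:Fin 5)).succAbove 1) = (2:Fin 5) by decide),
      (show (((0:Fin 5)).succAbove 2) = (3:Fin 5) by decide),
      (show (((0:Fin 5)).succAbove 3) = (4:Fin 5) by decide),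
      (show (((1:Fin 5)).succAbove 0) = (0:Fin 5) by decide),
      (show (((1:Fin 5)).succAbove 1) = (2:Fin 5) by decide),
      (show (((1:Fin 5)).succAbove 2) = (3:Fin 5) by decide),
      (show (((1:Fin 5)).succAbove 3) = (4:Fin 5) by decide),
      (show (((2:Fin 5)).succAbove 0) = (0:Fin 5) by decide),
      (show (((2:Fin 5)).succAbove 1) = (1:Fin 5) by decide),
      (show (((2:Fin 5)).succAbove 2) = (3:Fin 5) by decide),
      (show (((2:Fin 5)).succAbove 3) = (4:Fin 5) by decide),
      (show (((3:Fin 5)).succAbove 0) = (0:Fin 5) by decide),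
      (show (((3:Fin 5)).succAbove 1) = (1:Fin 5) by decide),
      (show (((3:Fin 5)).succAbove 2) = (2:Fin 5) by decide),
      (show (((3:Fin 5)).succAbove 3) = (4:Fin 5) by decide),
      (show (((4:Fin 5)).succAbove 0) = (0:Fin 5) by decide),
      (show (((4:Fin 5)).succAbove 1) = (1:Fin 5) by decide),
      (show (((4:Fin 5)).succAbove 2) = (2:Fin 5) by decide),
      (show (((4:Fin 5)).succAbove 3) = (3:Fin 5) by decide),
      (show (Fin.succ (0:Fin 4)) = (1:Fin 5) by decide),
      (show (Fin.castSucc (0:Fin 4)) = (0:Fin 5) by decide),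
      (show (Fin.succ (1:Fin 4)) = (2:Fin 5) by decide),
      (show (Fin.castSucc (1:Fin 4)) = (1:Fin 5) by decide),
      (show (Fin.succ (2:Fin 4)) = (3:Fin 5) by decide),
      (show (Fin.castSucc (2:Fin 4)) = (2:Fin 5) by decide),
      (show (Fin.succ (3:Fin 4)) = (4:Fin 5) by decide),
      (show (Fin.castSucc (3:Fin 4)) = (3:Fin 5) by decide),
           z0, z1, z2, z3, z4, h 1 0, h 2 0, h 3 0, h 4 0, h 2 1, h 3 1, h 4 1,
           h 3 2, h 4 2, h 4 3]
         try ring)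

lemma Pp_mul (A B : Matrix (Fin 5) (Fin 5) ℂ) (hA : Pp A) (hB : Pp B) : Pp (A * B) := by
  intro X hX
  have hskewB : (B * X * Bᵀ)ᵀ = -(B * X * Bᵀ) := by
    simp [Matrix.transpose_mul, Matrix.transpose_transpose, hX, Matrix.mul_neg,
      Matrix.neg_mul, Matrix.mul_assoc]
  have e1 : A * B * X * (A * B)ᵀ = A * (B * X * Bᵀ) * Aᵀ := by
    rw [Matrix.transpose_mul]; simp only [Matrix.mul_assoc]
  rw [e1, Matrix.transpose_mul, ← Matrix.mulVec_mulVec, hA _ hskewB, Matrix.mulVec_smul,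
    hB _ hX, Matrix.det_mul, smul_smul]

lemma Pp_all (A : Matrix (Fin 5) (Fin 5) ℂ) : Pp A :=
  diagonal_transvection_induction Pp A (fun D _ => Pp_diagonal D) Pp_transvection Pp_mul

lemma betaMap_eq (X Y : Matrix (Fin 5) (Fin 5) ℂ) :
    betaMap X Y = fun i => pvec (X + Y) i - pvec X i - pvec Y i := by
  funext i; simp [betaMap, pvec]; ring

lemma pvec_conj (A : Matrix (Fin 5) (Fin 5) ℂ) (hA : A.det = 1)
    (X : Matrix (Fin 5) (Fin 5) ℂ) (hX : Xᵀ = -X) :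
    pvec (A * X * Aᵀ) = (Aᵀ)⁻¹ *ᵥ pvec X := by
  have hdT : Aᵀ.det ≠ 0 := by rw [Matrix.det_transpose, hA]; exact one_ne_zero
  have h1 : (Aᵀ)⁻¹ * Aᵀ = 1 := Matrix.nonsing_inv_mul _ (isUnit_iff_ne_zero.2 hdT)
  have := Pp_all A X hX
  rw [hA, one_smul] at this
  calc pvec (A * X * Aᵀ) = ((Aᵀ)⁻¹ * Aᵀ) *ᵥ pvec (A * X * Aᵀ) := by rw [h1, Matrix.one_mulVec]
    _ = (Aᵀ)⁻¹ *ᵥ (Aᵀ *ᵥ pvec (A * X * Aᵀ)) := by rw [Matrix.mulVec_mulVec]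
    _ = (Aᵀ)⁻¹ *ᵥ pvec X := by rw [this]

lemma betaMap_conj (A : Matrix (Fin 5) (Fin 5) ℂ) (hA : A.det = 1)
    (X Y : Matrix (Fin 5) (Fin 5) ℂ) (hX : Xᵀ = -X) (hY : Yᵀ = -Y) :
    betaMap (A * X * Aᵀ) (A * Y * Aᵀ) = (Aᵀ)⁻¹ *ᵥ betaMap X Y := by
  have hXY : (X + Y)ᵀ = -(X + Y) := by rw [Matrix.transpose_add, hX, hY, neg_add]
  have hsum : A * X * Aᵀ + A * Y * Aᵀ = A * (X + Y) * Aᵀ := by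
    rw [Matrix.mul_add, Matrix.add_mul]
  rw [betaMap_eq, betaMap_eq, hsum, pvec_conj A hA _ hXY, pvec_conj A hA _ hX,
    pvec_conj A hA _ hY]
  funext i
  simp [Matrix.mulVec, dotProduct, Finset.sum_sub_distrib, mul_sub]

lemma bracket_eq (i j k l m : Fin 4) (X : Fin 4 → Matrix (Fin 5) (Fin 5) ℂ) :
    bracket i j k l m X = betaMap (X i) (X j) ⬝ᵥ ((X k) *ᵥ betaMap (X l) (X m)) := by
  simp [bracket, dotProduct, mulVec, Finset.mul_sum, mul_assoc]

theorem bracket_sl5_invariant (A : Matrix (Fin 5) (Fin 5) ℂ) (hA : A.det = 1)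
    (X : Fin 4 → Matrix (Fin 5) (Fin 5) ℂ) (hX : ∀ t, (X t)ᵀ = -X t)
    (i j k l m : Fin 4) :
    bracket i j k l m (fun t => A * X t * Aᵀ) = bracket i j k l m X := by
  have hd : A.det ≠ 0 := by rw [hA]; exact one_ne_zero
  have hdT : Aᵀ.det ≠ 0 := by rw [Matrix.det_transpose, hA]; exact one_ne_zero
  have hTinv : Aᵀ * (Aᵀ)⁻¹ = 1 := Matrix.mul_nonsing_inv _ (isUnit_iff_ne_zero.2 hdT)
  have hinv : A⁻¹ * A = 1 := Matrix.nonsing_inv_mul _ (isUnit_iff_ne_zero.2 hd)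
  rw [bracket_eq, bracket_eq,
    betaMap_conj A hA _ _ (hX i) (hX j), betaMap_conj A hA _ _ (hX l) (hX m)]
  have e2 : (A * X k * Aᵀ) *ᵥ ((Aᵀ)⁻¹ *ᵥ betaMap (X l) (X m))
      = (A * X k) *ᵥ betaMap (X l) (X m) := by
    rw [Matrix.mulVec_mulVec, Matrix.mul_assoc (A * X k) Aᵀ _, hTinv, Matrix.mul_one]
  rw [e2]
  have e3 : (Aᵀ)⁻¹ *ᵥ betaMap (X i) (X j) = betaMap (X i) (X j) ᵥ* A⁻¹ := by
    rw [← Matrix.mulVec_transpose, Matrix.transpose_nonsing_inv]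
  rw [e3, ← Matrix.dotProduct_mulVec, Matrix.mulVec_mulVec, ← Matrix.mul_assoc, hinv,
    Matrix.one_mul]
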